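/- arXiv:2108.08531 — 5 statements merged into one kernel-verified Lean document; each statement's English description precedes it below -/
import Mathlib

section
/- Let G = PSL(3,q) for a prime power q ≥ 2, with d = gcd(3, q−1) and α = (q² + q + 1)/d. Then α divides the order of G, and α is coprime to |G|/α. -/
open Matrix

section Aux

variable {F : Type*} [Field F] [Fintype F] [DecidableEq F]

lemma aux_det_surj :
    Function.Surjective (GeneralLinearGroup.det : GL (Fin 3) F →* Fˣ) := by
  intro u
  have hdet : Matrix.det (Matrix.diagonal (fun i : Fin 3 => if i = 0 then (u : F) else 1)) = u := by
    rw [det_diagonal, Fin.prod_univ_three]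
    simp
  refine ⟨GeneralLinearGroup.mkOfDetNeZero _ (by rw [hdet]; exact u.ne_zero), ?_⟩
  ext
  simp only [GeneralLinearGroup.mkOfDetNeZero, GeneralLinearGroup.mk',
    Matrix.unitOfDetInvertible, GeneralLinearGroup.val_det_apply]
  exact hdet

noncomputable def aux_slEquivKer :
    SpecialLinearGroup (Fin 3) F ≃
      MonoidHom.ker (GeneralLinearGroup.det : GL (Fin 3) F →* Fˣ) where
  toFun A := ⟨SpecialLinearGroup.toGL A, SpecialLinearGroup.coeToGL_det A⟩
  invFun A := ⟨((A : GL (Fin 3) F) : Matrix (Fin 3) (Fin 3) F), by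
    have h := A.prop
    rw [MonoidHom.mem_ker] at h
    have := congrArg Units.val h
    simpa using this⟩
  left_inv A := Subtype.ext rfl
  right_inv A := Subtype.ext (Units.ext rfl)

lemma aux_card_GL_eq :
    Nat.card (GL (Fin 3) F) =
      (Fintype.card F - 1) * Nat.card (SpecialLinearGroup (Fin 3) F) := by
  rw [Subgroup.card_eq_card_quotient_mul_card_subgroup
    (MonoidHom.ker (GeneralLinearGroup.det : GL (Fin 3) F →* Fˣ))]
  congr 1
  · rw [Nat.card_congr (QuotientGroup.quotientKerEquivOfSurjective _ aux_det_surj).toEquiv]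
    rw [Nat.card_eq_fintype_card, Fintype.card_units]
  · exact (Nat.card_congr aux_slEquivKer).symm

lemma aux_card_rootsOfUnity (k : ℕ) (hk : Fintype.card Fˣ = k) (hk1 : 1 ≤ k) :
    Nat.card (rootsOfUnity 3 F) = Nat.gcd 3 k := by
  set g := Nat.gcd 3 k with hg
  have hgk : g ∣ k := Nat.gcd_dvd_right 3 k
  have hg0 : 0 < g := Nat.gcd_pos_of_pos_left k (by norm_num)
  have hroots : rootsOfUnity 3 F = rootsOfUnity g F := by
    ext x
    simp only [mem_rootsOfUnity]
    constructor
    · intro h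
      have h3 : orderOf x ∣ 3 := orderOf_dvd_of_pow_eq_one h
      have hc : orderOf x ∣ k := hk ▸ orderOf_dvd_card
      exact orderOf_dvd_iff_pow_eq_one.mp (Nat.dvd_gcd h3 hc)
    · intro h
      obtain ⟨c, hc⟩ := Nat.gcd_dvd_left 3 k
      rw [← hg] at hc
      rw [hc, pow_mul, h, one_pow]
  obtain ⟨ζ, hζ⟩ := IsCyclic.exists_ofOrder_eq_natCard (α := Fˣ)
  have hζk : orderOf ζ = k := by rw [hζ, Nat.card_eq_fintype_card, hk]
  set m := k / g with hm
  have hkm : g * m = k := Nat.mul_div_cancel' hgk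
  have hm0 : 0 < m := Nat.div_pos (Nat.le_of_dvd (by omega) hgk) hg0
  have hord : orderOf (ζ ^ m) = g := by
    rw [orderOf_pow, hζk]
    have h1 : Nat.gcd k m = m := Nat.gcd_eq_right ⟨g, by rw [← hkm]; ring⟩
    rw [h1, ← hkm, Nat.mul_div_cancel g hm0]
  have hprim : IsPrimitiveRoot (ζ ^ m) g := hord ▸ IsPrimitiveRoot.orderOf (ζ ^ m)
  haveI : NeZero g := ⟨by omega⟩
  rw [hroots, hprim.card_rootsOfUnity']

end Aux

theorem stmt4 (p n q : ℕ) (hp : p.Prime) (hn : 1 ≤ n) (hq : q = p ^ n)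
    (hq2 : 2 ≤ q) (hpI : Fact p.Prime)
    (α : ℕ) (hα : α = (q ^ 2 + q + 1) / Nat.gcd 3 (q - 1)) :
    α ∣ Nat.card (ProjectiveSpecialLinearGroup (Fin 3) (GaloisField p n)) ∧
      Nat.Coprime α
        (Nat.card (ProjectiveSpecialLinearGroup (Fin 3) (GaloisField p n)) / α) := by
  set F := GaloisField p n with hF
  have hn0 : n ≠ 0 := by omega
  haveI : DecidableEq F := Classical.decEq F
  haveI : Fintype F := Fintype.ofFinite F
  have hcard : Fintype.card F = q := by
    rw [hq, ← GaloisField.card p n hn0, Nat.card_eq_fintype_card]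
  obtain ⟨k, hk⟩ : ∃ k, q = k + 1 := ⟨q - 1, by omega⟩
  have hk1 : 1 ≤ k := by omega
  have hunits : Fintype.card Fˣ = k := by rw [Fintype.card_units, hcard]; omega
  set g := Nat.gcd 3 k with hg
  have hg0 : 0 < g := Nat.gcd_pos_of_pos_left k (by norm_num)
  have hg3 : g ∣ 3 := Nat.gcd_dvd_left 3 k
  have hgk : g ∣ k := Nat.gcd_dvd_right 3 k
  -- α * g = k^2 + 3k + 3
  have hsum : q ^ 2 + q + 1 = k ^ 2 + 3 * k + 3 := by subst hk; ring
  have hgdvd : g ∣ k ^ 2 + 3 * k + 3 := by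
    have h1 : g ∣ k * k := hgk.mul_left k
    have h2 : g ∣ 3 * k := hgk.mul_left 3
    have h3 : g ∣ k * k + 3 * k + 3 := (h1.add h2).add hg3
    simpa [pow_two] using h3
  have hαg : α * g = k ^ 2 + 3 * k + 3 := by
    rw [hα, hsum, show q - 1 = k from by omega, ← hg]
    exact Nat.div_mul_cancel hgdvd
  have hα0 : 0 < α := by
    rcases Nat.eq_zero_or_pos α with h | h
    · rw [h, zero_mul] at hαg; omega
    · exact h
  -- cardinalities
  set NPSL := Nat.card (ProjectiveSpecialLinearGroup (Fin 3) F) with hNPSL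
  have hcenter : Nat.card (Subgroup.center (SpecialLinearGroup (Fin 3) F)) = g := by
    have e := SpecialLinearGroup.center_equiv_rootsOfUnity' (n := Fin 3) (R := F) 0
    rw [Nat.card_congr e.toEquiv]
    have h3 : Fintype.card (Fin 3) = 3 := by simp
    rw [h3]
    exact aux_card_rootsOfUnity k hunits hk1
  have hSL : Nat.card (SpecialLinearGroup (Fin 3) F) = NPSL * g := by
    rw [Subgroup.card_eq_card_quotient_mul_card_subgroup
      (Subgroup.center (SpecialLinearGroup (Fin 3) F)), hcenter]
  have hGL : Nat.card (GL (Fin 3) F) = k * (NPSL * g) := by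
    rw [aux_card_GL_eq, hSL, hcard]
    congr 1
    omega
  have hGLval : Nat.card (GL (Fin 3) F) =
      (q ^ 3 - 1) * (q ^ 3 - q) * (q ^ 3 - q ^ 2) := by
    rw [Matrix.card_GL_field, hcard, Fin.prod_univ_three]
    norm_num
  have e1 : q ^ 3 - 1 = k * (k ^ 2 + 3 * k + 3) := by
    have : q ^ 3 = k * (k ^ 2 + 3 * k + 3) + 1 := by subst hk; ring
    omega
  have e2 : q ^ 3 - q = (k + 1) * (k * (k + 2)) := by
    have : q ^ 3 = (k + 1) * (k * (k + 2)) + q := by subst hk; ring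
    omega
  have e3 : q ^ 3 - q ^ 2 = q ^ 2 * k := by
    have : q ^ 3 = q ^ 2 * k + q ^ 2 := by subst hk; ring
    omega
  set M := (k + 1) ^ 3 * (k ^ 2 * (k + 2)) with hM
  have hNval : NPSL = α * M := by
    have key : (NPSL * (g * k)) = (α * M) * (g * k) := by
      have lhs : NPSL * (g * k) = Nat.card (GL (Fin 3) F) := by rw [hGL]; ring
      rw [lhs, hGLval, e1, e2, e3, show q ^ 2 = (k + 1) ^ 2 from by rw [hk], hM, ← hαg]
      ring
    exact Nat.eq_of_mul_eq_mul_right (by positivity) key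
  have hdvdα : α ∣ k ^ 2 + 3 * k + 3 := ⟨g, hαg.symm⟩
  -- coprimality pieces
  have c1 : Nat.Coprime α (k + 1) := by
    have h1 : Nat.gcd (k + 1) (k ^ 2 + 3 * k + 3) = 1 := by
      rw [show k ^ 2 + 3 * k + 3 = 1 + (k + 2) * (k + 1) from by ring,
        Nat.gcd_add_mul_right_right, Nat.gcd_one_right]
    exact Nat.Coprime.coprime_dvd_left hdvdα (Nat.coprime_comm.mp h1)
  have c2 : Nat.Coprime α (k + 2) := by
    have h1 : Nat.gcd (k + 2) (k ^ 2 + 3 * k + 3) = 1 := by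
      rw [show k ^ 2 + 3 * k + 3 = 1 + (k + 1) * (k + 2) from by ring,
        Nat.gcd_add_mul_right_right, Nat.gcd_one_right]
    exact Nat.Coprime.coprime_dvd_left hdvdα (Nat.coprime_comm.mp h1)
  have c3 : Nat.Coprime α k := by
    have hg13 : g = 1 ∨ g = 3 :=
      (Nat.Prime.eq_one_or_self_of_dvd Nat.prime_three g hg3)
    rcases hg13 with h1 | h3
    · have hαval : α = k ^ 2 + 3 * k + 3 := by rw [← hαg, h1, mul_one]
      have : Nat.gcd k (k ^ 2 + 3 * k + 3) = Nat.gcd k 3 := by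
        rw [show k ^ 2 + 3 * k + 3 = 3 + (k + 3) * k from by ring,
          Nat.gcd_add_mul_right_right]
      rw [Nat.Coprime, hαval, Nat.gcd_comm, this, Nat.gcd_comm]
      omega
    · obtain ⟨t, ht⟩ : 3 ∣ k := h3 ▸ hgk
      have hαt : α = 3 * t ^ 2 + 3 * t + 1 := by
        have h1 := hαg
        rw [h3] at h1
        have h2 : k ^ 2 + 3 * k + 3 = (3 * t ^ 2 + 3 * t + 1) * 3 := by rw [ht]; ring
        omega
      have hcα3 : Nat.gcd α 3 = 1 := by
        rw [hαt, show 3 * t ^ 2 + 3 * t + 1 = 1 + (t ^ 2 + t) * 3 from by ring,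
          Nat.gcd_comm, Nat.gcd_add_mul_right_right, Nat.gcd_one_right]
      have hdvd3 : Nat.gcd α k ∣ 3 := by
        have d1 : Nat.gcd α k ∣ k ^ 2 + 3 * k := by
          have h := Nat.gcd_dvd_right α k
          have h2 := (h.mul_left k).add (h.mul_left 3)
          simpa [pow_two] using h2
        have d2 : Nat.gcd α k ∣ k ^ 2 + 3 * k + 3 :=
          dvd_trans (Nat.gcd_dvd_left α k) hdvdα
        have hsub := Nat.dvd_sub d2 d1
        have h3' : k ^ 2 + 3 * k + 3 - (k ^ 2 + 3 * k) = 3 := by omega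
        rwa [h3'] at hsub
      have : Nat.gcd α k ∣ 1 := hcα3 ▸ Nat.dvd_gcd (Nat.gcd_dvd_left α k) hdvd3
      exact Nat.eq_one_of_dvd_one this
  have hco : Nat.Coprime α M := by
    rw [hM]
    exact Nat.Coprime.mul_right (c1.pow_right 3) (Nat.Coprime.mul_right (c3.pow_right 2) c2)
  refine ⟨⟨M, hNval⟩, ?_⟩
  rw [hNval, Nat.mul_div_cancel_left M hα0]
  exact hco
end

section
/- There exist elements a, b, c in the alternating group A₇ such that c has order 7, [a,b]·c = 1, and ⟨a, b, c⟩ = A₇. (Explicitly, a = (1,7,2,6)(3,5), b = (3,4,6,7,5), c = (1,2,3,4,5,7,6) work.) -/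
set_option maxRecDepth 10000
set_option maxHeartbeats 2000000
open Equiv
open scoped commutatorElement

def gA : Equiv.Perm (Fin 7) := Equiv.swap 0 6 * Equiv.swap 6 1 * Equiv.swap 1 5 * Equiv.swap 2 4
def gB : Equiv.Perm (Fin 7) := Equiv.swap 2 3 * Equiv.swap 3 5 * Equiv.swap 5 6 * Equiv.swap 6 4
def gC : Equiv.Perm (Fin 7) := Equiv.swap 0 1 * Equiv.swap 1 2 * Equiv.swap 2 3 * Equiv.swap 3 4 * Equiv.swap 4 6 * Equiv.swap 6 5

lemma rot3 {α : Type*} [DecidableEq α] {x y z : α} (hxy : x ≠ y) (hyz : y ≠ z) (hxz : x ≠ z) :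
    Equiv.swap x y * Equiv.swap y z = Equiv.swap y z * Equiv.swap z x := by
  ext t
  simp only [Equiv.Perm.mul_apply, Equiv.swap_apply_def]
  split_ifs <;> simp_all
lemma comp3 {α : Type*} [DecidableEq α] {a x y z : α} (hax : a ≠ x) (hay : a ≠ y) (haz : a ≠ z)
    (hxy : x ≠ y) (hyz : y ≠ z) (hxz : x ≠ z) :
    Equiv.swap x y * Equiv.swap y z =
      (Equiv.swap a x * Equiv.swap x y) * (Equiv.swap a y * Equiv.swap y z) := by
  ext t
  simp only [Equiv.Perm.mul_apply, Equiv.swap_apply_def]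
  split_ifs <;> simp_all

lemma three_decomp {α : Type*} [DecidableEq α] [Fintype α] {σ : Equiv.Perm α}
    (h : σ.IsThreeCycle) : ∃ x y z : α, x ≠ y ∧ y ≠ z ∧ x ≠ z ∧
      σ = Equiv.swap x y * Equiv.swap y z := by
  obtain ⟨x, hx, -⟩ := h.isCycle
  have h3 : σ ^ 3 = 1 := by rw [← h.orderOf]; exact pow_orderOf_eq_one σ
  have hz : σ (σ (σ x)) = x := by
    have := Equiv.Perm.ext_iff.mp h3 x
    simpa [pow_succ, Equiv.Perm.mul_apply] using this
  have hyz : σ x ≠ σ (σ x) := fun he => hx (σ.injective he).symm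
  have hxz : x ≠ σ (σ x) := by
    intro he
    apply hx
    conv_lhs => rw [he]
    exact hz
  refine ⟨x, σ x, σ (σ x), Ne.symm hx, hyz, hxz, ?_⟩
  have hmem : ∀ t ∈ ({x, σ x, σ (σ x)} : Finset α), t ∈ σ.support := by
    intro t ht
    simp only [Finset.mem_insert, Finset.mem_singleton] at ht
    rcases ht with rfl | rfl | rfl <;> rw [Equiv.Perm.mem_support]
    · exact hx
    · exact Ne.symm hyz
    · rw [hz]; exact hxz
  have hcard : ({x, σ x, σ (σ x)} : Finset α).card = 3 := by
    rw [Finset.card_insert_of_notMem (by simp [Ne.symm hx, hxz]),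
      Finset.card_insert_of_notMem (by simp [hyz]), Finset.card_singleton]
  have hsupp : σ.support = {x, σ x, σ (σ x)} := by
    refine (Finset.eq_of_subset_of_card_le (fun t ht => hmem t ht) ?_).symm
    rw [h.card_support, hcard]
  ext t
  by_cases ht : t ∈ σ.support
  · rw [hsupp] at ht
    simp only [Finset.mem_insert, Finset.mem_singleton] at ht
    rcases ht with rfl | rfl | rfl
    · rw [Equiv.Perm.mul_apply, Equiv.swap_apply_of_ne_of_ne (Ne.symm hx) hxz,
        Equiv.swap_apply_left]
    · rw [Equiv.Perm.mul_apply, Equiv.swap_apply_left,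
        Equiv.swap_apply_of_ne_of_ne (Ne.symm hxz) (Ne.symm hyz)]
    · rw [Equiv.Perm.mul_apply, Equiv.swap_apply_right, Equiv.swap_apply_right, hz]
  · have h1 : σ t = t := Equiv.Perm.notMem_support.mp ht
    rw [hsupp] at ht
    simp only [Finset.mem_insert, Finset.mem_singleton, not_or] at ht
    obtain ⟨h2, h3', h4⟩ := ht
    rw [h1, Equiv.Perm.mul_apply, Equiv.swap_apply_of_ne_of_ne h3' h4,
      Equiv.swap_apply_of_ne_of_ne h2 h3']

theorem alt_le : alternatingGroup (Fin 7) ≤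
    Subgroup.closure ({gB, gA, gC} : Set (Equiv.Perm (Fin 7))) := by
  set H' := Subgroup.closure ({gB, gA, gC} : Set (Equiv.Perm (Fin 7))) with hH
  have ha : gA ∈ H' := Subgroup.subset_closure (by simp)
  have hb : gB ∈ H' := Subgroup.subset_closure (by simp)
  have hc : gC ∈ H' := Subgroup.subset_closure (by simp)
  have h0 : (Equiv.swap 0 1 * Equiv.swap 1 2 : Equiv.Perm (Fin 7)) ∈ H' := by
    have h := (mul_mem (mul_mem (mul_mem (inv_mem ha) (inv_mem hc)) ha) (inv_mem hc))
    rwa [show (gA⁻¹ * gC⁻¹ * gA * gC⁻¹ : Equiv.Perm (Fin 7)) = Equiv.swap 0 1 * Equiv.swap 1 2 by decide] at h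
  have h1 : (Equiv.swap 0 1 * Equiv.swap 1 3 : Equiv.Perm (Fin 7)) ∈ H' := by
    have h := (mul_mem (mul_mem (mul_mem (mul_mem (inv_mem hb) (inv_mem hc)) (inv_mem ha)) hb) ha)
    rwa [show (gB⁻¹ * gC⁻¹ * gA⁻¹ * gB * gA : Equiv.Perm (Fin 7)) = Equiv.swap 0 1 * Equiv.swap 1 3 by decide] at h
  have h2 : (Equiv.swap 0 1 * Equiv.swap 1 4 : Equiv.Perm (Fin 7)) ∈ H' := by
    have h := (mul_mem (mul_mem (mul_mem (mul_mem (mul_mem hb hc) hc) (inv_mem hb)) ha) hb)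
    rwa [show (gB * gC * gC * gB⁻¹ * gA * gB : Equiv.Perm (Fin 7)) = Equiv.swap 0 1 * Equiv.swap 1 4 by decide] at h
  have h3 : (Equiv.swap 0 1 * Equiv.swap 1 5 : Equiv.Perm (Fin 7)) ∈ H' := by
    have h := (mul_mem (mul_mem (mul_mem hc ha) hc) ha)
    rwa [show (gC * gA * gC * gA : Equiv.Perm (Fin 7)) = Equiv.swap 0 1 * Equiv.swap 1 5 by decide] at h
  have h4 : (Equiv.swap 0 1 * Equiv.swap 1 6 : Equiv.Perm (Fin 7)) ∈ H' := by
    have h := (mul_mem (mul_mem (mul_mem (mul_mem (inv_mem hc) (inv_mem hb)) ha) (inv_mem hb)) (inv_mem hc))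
    rwa [show (gC⁻¹ * gB⁻¹ * gA * gB⁻¹ * gC⁻¹ : Equiv.Perm (Fin 7)) = Equiv.swap 0 1 * Equiv.swap 1 6 by decide] at h
  have h5 : (Equiv.swap 0 2 * Equiv.swap 2 1 : Equiv.Perm (Fin 7)) ∈ H' := by
    have h := (mul_mem (mul_mem (mul_mem hc (inv_mem ha)) hc) ha)
    rwa [show (gC * gA⁻¹ * gC * gA : Equiv.Perm (Fin 7)) = Equiv.swap 0 2 * Equiv.swap 2 1 by decide] at h
  have h6 : (Equiv.swap 0 2 * Equiv.swap 2 3 : Equiv.Perm (Fin 7)) ∈ H' := by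
    have h := (mul_mem (mul_mem (mul_mem (mul_mem (inv_mem ha) hc) (inv_mem hb)) ha) hc)
    rwa [show (gA⁻¹ * gC * gB⁻¹ * gA * gC : Equiv.Perm (Fin 7)) = Equiv.swap 0 2 * Equiv.swap 2 3 by decide] at h
  have h7 : (Equiv.swap 0 2 * Equiv.swap 2 4 : Equiv.Perm (Fin 7)) ∈ H' := by
    have h := (mul_mem (mul_mem (mul_mem (mul_mem hb (inv_mem hc)) hb) ha) hc)
    rwa [show (gB * gC⁻¹ * gB * gA * gC : Equiv.Perm (Fin 7)) = Equiv.swap 0 2 * Equiv.swap 2 4 by decide] at h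
  have h8 : (Equiv.swap 0 2 * Equiv.swap 2 5 : Equiv.Perm (Fin 7)) ∈ H' := by
    have h := (mul_mem (mul_mem (mul_mem (mul_mem (mul_mem ha hb) hc) hb) (inv_mem hc)) (inv_mem hc))
    rwa [show (gA * gB * gC * gB * gC⁻¹ * gC⁻¹ : Equiv.Perm (Fin 7)) = Equiv.swap 0 2 * Equiv.swap 2 5 by decide] at h
  have h9 : (Equiv.swap 0 2 * Equiv.swap 2 6 : Equiv.Perm (Fin 7)) ∈ H' := by
    have h := (mul_mem (mul_mem (mul_mem (inv_mem hc) (inv_mem hb)) (inv_mem hb)) ha)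
    rwa [show (gC⁻¹ * gB⁻¹ * gB⁻¹ * gA : Equiv.Perm (Fin 7)) = Equiv.swap 0 2 * Equiv.swap 2 6 by decide] at h
  have h10 : (Equiv.swap 0 3 * Equiv.swap 3 1 : Equiv.Perm (Fin 7)) ∈ H' := by
    have h := (mul_mem (mul_mem (mul_mem (mul_mem (inv_mem ha) (inv_mem hb)) ha) hc) hb)
    rwa [show (gA⁻¹ * gB⁻¹ * gA * gC * gB : Equiv.Perm (Fin 7)) = Equiv.swap 0 3 * Equiv.swap 3 1 by decide] at h
  have h11 : (Equiv.swap 0 3 * Equiv.swap 3 2 : Equiv.Perm (Fin 7)) ∈ H' := by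
    have h := (mul_mem (mul_mem (mul_mem (mul_mem (inv_mem hc) (inv_mem ha)) hb) (inv_mem hc)) ha)
    rwa [show (gC⁻¹ * gA⁻¹ * gB * gC⁻¹ * gA : Equiv.Perm (Fin 7)) = Equiv.swap 0 3 * Equiv.swap 3 2 by decide] at h
  have h12 : (Equiv.swap 0 3 * Equiv.swap 3 4 : Equiv.Perm (Fin 7)) ∈ H' := by
    have h := (mul_mem (mul_mem (mul_mem (mul_mem (mul_mem hb (inv_mem hc)) hb) hb) (inv_mem hc)) ha)
    rwa [show (gB * gC⁻¹ * gB * gB * gC⁻¹ * gA : Equiv.Perm (Fin 7)) = Equiv.swap 0 3 * Equiv.swap 3 4 by decide] at h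
  have h13 : (Equiv.swap 0 3 * Equiv.swap 3 5 : Equiv.Perm (Fin 7)) ∈ H' := by
    have h := (mul_mem (mul_mem (mul_mem (mul_mem (mul_mem ha hc) (inv_mem ha)) hb) hb) (inv_mem ha))
    rwa [show (gA * gC * gA⁻¹ * gB * gB * gA⁻¹ : Equiv.Perm (Fin 7)) = Equiv.swap 0 3 * Equiv.swap 3 5 by decide] at h
  have h14 : (Equiv.swap 0 3 * Equiv.swap 3 6 : Equiv.Perm (Fin 7)) ∈ H' := by
    have h := (mul_mem (mul_mem (mul_mem (mul_mem (inv_mem ha) hb) hc) hc) hb)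
    rwa [show (gA⁻¹ * gB * gC * gC * gB : Equiv.Perm (Fin 7)) = Equiv.swap 0 3 * Equiv.swap 3 6 by decide] at h
  have h15 : (Equiv.swap 0 4 * Equiv.swap 4 1 : Equiv.Perm (Fin 7)) ∈ H' := by
    have h := (mul_mem (mul_mem (mul_mem (mul_mem (mul_mem hb hc) hb) (inv_mem hc)) ha) hc)
    rwa [show (gB * gC * gB * gC⁻¹ * gA * gC : Equiv.Perm (Fin 7)) = Equiv.swap 0 4 * Equiv.swap 4 1 by decide] at h
  have h16 : (Equiv.swap 0 4 * Equiv.swap 4 2 : Equiv.Perm (Fin 7)) ∈ H' := by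
    have h := (mul_mem (mul_mem (mul_mem (mul_mem (inv_mem hc) (inv_mem ha)) (inv_mem hb)) hc) (inv_mem hb))
    rwa [show (gC⁻¹ * gA⁻¹ * gB⁻¹ * gC * gB⁻¹ : Equiv.Perm (Fin 7)) = Equiv.swap 0 4 * Equiv.swap 4 2 by decide] at h
  have h17 : (Equiv.swap 0 4 * Equiv.swap 4 3 : Equiv.Perm (Fin 7)) ∈ H' := by
    have h := (mul_mem (mul_mem (mul_mem (mul_mem (mul_mem hb (inv_mem ha)) hb) hb) hc) (inv_mem hb))
    rwa [show (gB * gA⁻¹ * gB * gB * gC * gB⁻¹ : Equiv.Perm (Fin 7)) = Equiv.swap 0 4 * Equiv.swap 4 3 by decide] at h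
  have h18 : (Equiv.swap 0 4 * Equiv.swap 4 5 : Equiv.Perm (Fin 7)) ∈ H' := by
    have h := (mul_mem (mul_mem (mul_mem (mul_mem (inv_mem hc) (inv_mem hc)) (inv_mem hb)) ha) (inv_mem hb))
    rwa [show (gC⁻¹ * gC⁻¹ * gB⁻¹ * gA * gB⁻¹ : Equiv.Perm (Fin 7)) = Equiv.swap 0 4 * Equiv.swap 4 5 by decide] at h
  have h19 : (Equiv.swap 0 4 * Equiv.swap 4 6 : Equiv.Perm (Fin 7)) ∈ H' := by
    have h := (mul_mem (mul_mem (mul_mem (mul_mem (inv_mem hc) hb) ha) hc) hb)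
    rwa [show (gC⁻¹ * gB * gA * gC * gB : Equiv.Perm (Fin 7)) = Equiv.swap 0 4 * Equiv.swap 4 6 by decide] at h
  have h20 : (Equiv.swap 0 5 * Equiv.swap 5 1 : Equiv.Perm (Fin 7)) ∈ H' := by
    have h := (mul_mem (mul_mem (mul_mem (inv_mem ha) hc) ha) hc)
    rwa [show (gA⁻¹ * gC * gA * gC : Equiv.Perm (Fin 7)) = Equiv.swap 0 5 * Equiv.swap 5 1 by decide] at h
  have h21 : (Equiv.swap 0 5 * Equiv.swap 5 2 : Equiv.Perm (Fin 7)) ∈ H' := by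
    have h := (mul_mem (mul_mem (mul_mem (mul_mem (mul_mem hc hc) (inv_mem hb)) (inv_mem hc)) (inv_mem hb)) (inv_mem ha))
    rwa [show (gC * gC * gB⁻¹ * gC⁻¹ * gB⁻¹ * gA⁻¹ : Equiv.Perm (Fin 7)) = Equiv.swap 0 5 * Equiv.swap 5 2 by decide] at h
  have h22 : (Equiv.swap 0 5 * Equiv.swap 5 3 : Equiv.Perm (Fin 7)) ∈ H' := by
    have h := (mul_mem (mul_mem (mul_mem (mul_mem (mul_mem ha ha) hb) hc) ha) hb)
    rwa [show (gA * gA * gB * gC * gA * gB : Equiv.Perm (Fin 7)) = Equiv.swap 0 5 * Equiv.swap 5 3 by decide] at h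
  have h23 : (Equiv.swap 0 5 * Equiv.swap 5 4 : Equiv.Perm (Fin 7)) ∈ H' := by
    have h := (mul_mem (mul_mem (mul_mem (mul_mem hb (inv_mem ha)) hb) hc) hc)
    rwa [show (gB * gA⁻¹ * gB * gC * gC : Equiv.Perm (Fin 7)) = Equiv.swap 0 5 * Equiv.swap 5 4 by decide] at h
  have h24 : (Equiv.swap 0 5 * Equiv.swap 5 6 : Equiv.Perm (Fin 7)) ∈ H' := by
    have h := (mul_mem (mul_mem (mul_mem hc ha) hc) (inv_mem ha))
    rwa [show (gC * gA * gC * gA⁻¹ : Equiv.Perm (Fin 7)) = Equiv.swap 0 5 * Equiv.swap 5 6 by decide] at h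
  have h25 : (Equiv.swap 0 6 * Equiv.swap 6 1 : Equiv.Perm (Fin 7)) ∈ H' := by
    have h := (mul_mem (mul_mem (mul_mem (mul_mem hc hb) (inv_mem ha)) hb) hc)
    rwa [show (gC * gB * gA⁻¹ * gB * gC : Equiv.Perm (Fin 7)) = Equiv.swap 0 6 * Equiv.swap 6 1 by decide] at h
  have h26 : (Equiv.swap 0 6 * Equiv.swap 6 2 : Equiv.Perm (Fin 7)) ∈ H' := by
    have h := (mul_mem (mul_mem (mul_mem (inv_mem ha) hb) hb) hc)
    rwa [show (gA⁻¹ * gB * gB * gC : Equiv.Perm (Fin 7)) = Equiv.swap 0 6 * Equiv.swap 6 2 by decide] at h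
  have h27 : (Equiv.swap 0 6 * Equiv.swap 6 3 : Equiv.Perm (Fin 7)) ∈ H' := by
    have h := (mul_mem (mul_mem (mul_mem (mul_mem (inv_mem hb) (inv_mem hc)) (inv_mem hc)) (inv_mem hb)) ha)
    rwa [show (gB⁻¹ * gC⁻¹ * gC⁻¹ * gB⁻¹ * gA : Equiv.Perm (Fin 7)) = Equiv.swap 0 6 * Equiv.swap 6 3 by decide] at h
  have h28 : (Equiv.swap 0 6 * Equiv.swap 6 4 : Equiv.Perm (Fin 7)) ∈ H' := by
    have h := (mul_mem (mul_mem (mul_mem (mul_mem (inv_mem hb) (inv_mem hc)) (inv_mem ha)) (inv_mem hb)) hc)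
    rwa [show (gB⁻¹ * gC⁻¹ * gA⁻¹ * gB⁻¹ * gC : Equiv.Perm (Fin 7)) = Equiv.swap 0 6 * Equiv.swap 6 4 by decide] at h
  have h29 : (Equiv.swap 0 6 * Equiv.swap 6 5 : Equiv.Perm (Fin 7)) ∈ H' := by
    have h := (mul_mem (mul_mem (mul_mem ha hc) ha) hc)
    rwa [show (gA * gC * gA * gC : Equiv.Perm (Fin 7)) = Equiv.swap 0 6 * Equiv.swap 6 5 by decide] at h
  have key0 : ∀ y z : Fin 7, y ≠ z → y ≠ 0 → z ≠ 0 →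
      Equiv.swap 0 y * Equiv.swap y z ∈ H' := by
    intro y z h1 h2 h3
    fin_cases y <;> fin_cases z <;>
      first
        | exact absurd rfl h1
        | exact absurd rfl h2
        | exact absurd rfl h3
        | assumption
  have key : ∀ x y z : Fin 7, x ≠ y → y ≠ z → x ≠ z →
      Equiv.swap x y * Equiv.swap y z ∈ H' := by
    intro x y z hxy hyz hxz
    by_cases hx0 : x = 0
    · subst hx0; exact key0 y z hyz (Ne.symm hxy) (Ne.symm hxz)
    by_cases hy0 : y = 0
    · subst hy0
      rw [rot3 hxy hyz hxz]
      exact key0 z x (Ne.symm hxz) (Ne.symm hyz) hx0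
    by_cases hz0 : z = 0
    · subst hz0
      rw [rot3 hxy hyz hxz, rot3 hyz (Ne.symm hxz) (Ne.symm hxy)]
      exact key0 x y hxy hx0 hy0
    · rw [comp3 (Ne.symm hx0) (Ne.symm hy0) (Ne.symm hz0) hxy hyz hxz]
      exact mul_mem (key0 x y hxy hx0 hy0) (key0 y z hyz hy0 hz0)
  rw [← Equiv.Perm.closure_three_cycles_eq_alternating]
  refine (Subgroup.closure_le _).mpr ?_
  intro σ hσ
  rw [SetLike.mem_coe]
  obtain ⟨x, y, z, hxy, hyz, hxz, rfl⟩ := three_decomp hσ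
  exact key x y z hxy hyz hxz

theorem stmt8 : ∃ a b c : alternatingGroup (Fin 7),
    orderOf c = 7 ∧ ⁅a, b⁆ * c = 1 ∧
      Subgroup.closure ({a, b, c} : Set (alternatingGroup (Fin 7))) = ⊤ := by
  have hAalt : gA ∈ alternatingGroup (Fin 7) := by
    rw [Equiv.Perm.mem_alternatingGroup]; decide
  have hBalt : gB ∈ alternatingGroup (Fin 7) := by
    rw [Equiv.Perm.mem_alternatingGroup]; decide
  have hCalt : gC ∈ alternatingGroup (Fin 7) := by
    rw [Equiv.Perm.mem_alternatingGroup]; decide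
  refine ⟨⟨gB, hBalt⟩, ⟨gA, hAalt⟩, ⟨gC, hCalt⟩, ?_, ?_, ?_⟩
  · haveI : Fact (Nat.Prime 7) := ⟨by norm_num⟩
    refine orderOf_eq_prime ?_ ?_
    · refine Subtype.ext ?_
      push_cast
      decide
    · intro h
      exact absurd (congrArg Subtype.val h) (by decide : ¬ (gC = 1))
  · refine Subtype.ext ?_
    show ((⁅(⟨gB, hBalt⟩ : alternatingGroup (Fin 7)), ⟨gA, hAalt⟩⁆ *
      ⟨gC, hCalt⟩ : alternatingGroup (Fin 7)) : Equiv.Perm (Fin 7)) = 1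
    rw [commutatorElement_def]
    push_cast
    decide
  · rw [eq_top_iff]
    intro x _
    have hx : (x : Equiv.Perm (Fin 7)) ∈ Subgroup.map (alternatingGroup (Fin 7)).subtype
        (Subgroup.closure {⟨gB, hBalt⟩, ⟨gA, hAalt⟩, ⟨gC, hCalt⟩}) := by
      rw [MonoidHom.map_closure]
      have himg : (alternatingGroup (Fin 7)).subtype ''
          {⟨gB, hBalt⟩, ⟨gA, hAalt⟩, ⟨gC, hCalt⟩} = ({gB, gA, gC} : Set (Equiv.Perm (Fin 7))) := by
        simp [Set.image_insert_eq]
      rw [himg]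
      exact alt_le x.2
    obtain ⟨y, hy, hyx⟩ := hx
    have hyx' : y = x := Subtype.coe_injective hyx
    exact hyx' ▸ hy
end

section
/- There exist elements a, b, c in PSL(2,7), realized as the permutations (1,2,5)(3,7,8), (1,2,6,8)(3,7,5,4), (2,4,6,5,8,3,7) of 8 points, such that c has order 7, [a,b]·c = 1, and a, b, c generate the whole group. -/
open Matrix
open scoped commutatorElement

namespace Stmt9Aux

abbrev SL7 := Matrix.SpecialLinearGroup (Fin 2) (ZMod 7)

def MA : SL7 := ⟨!![4,5;6,6], by decide⟩
def MB : SL7 := ⟨!![5,0;3,3], by decide⟩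

instance : DecidableEq SL7 :=
  inferInstanceAs (DecidableEq {A : Matrix (Fin 2) (Fin 2) (ZMod 7) // A.det = 1})

def wf (l : List Bool) : SL7 := (l.map (fun b => if b then MA else MB)).prod

def words : List (List Bool) := [[],[true],[false],[true,true],[true,false],[false,true],[false,false],[true,true,true],[true,true,false],[true,false,true],[true,false,false],[false,true,true],[false,true,false],[false,false,true],[false,false,false],[true,true,true,false],[true,true,false,true],[true,true,false,false],[true,false,true,true],[true,false,true,false],[true,false,false,true],[true,false,false,false],[false,true,true,true],[false,true,true,false],[false,true,false,true],[false,true,false,false],[false,false,true,true],[false,false,true,false],[false,false,false,false],[true,true,true,false,true],[true,true,true,false,false],[true,true,false,true,true],[true,true,false,true,false],[true,true,false,false,true],[true,true,false,false,false],[true,false,true,true,true],[true,false,true,true,false],[true,false,true,false,true],[true,false,true,false,false],[true,false,false,true,true],[true,false,false,true,false],[true,false,false,false,false],[false,true,true,false,true],[false,true,true,false,false],[false,true,false,true,true],[false,true,false,true,false],[false,true,false,false,true],[false,true,false,false,false],[false,false,true,true,true],[false,false,true,true,false],[false,false,true,false,true],[false,false,true,false,false],[false,false,false,false,false],[true,t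rue,true,false,true,true],[true,true,true,false,true,false],[true,true,true,false,false,true],[true,true,true,false,false,false],[true,true,false,true,true,true],[true,true,false,true,true,false],[true,true,false,true,false,true],[true,true,false,true,false,false],[true,true,false,false,true,true],[true,true,false,false,true,false],[true,true,false,false,false,false],[true,false,true,true,false,true],[true,false,true,true,false,false],[true,false,true,false,true,true],[true,false,true,false,true,false],[true,false,true,false,false,true],[true,false,true,false,false,false],[true,false,false,true,true,true],[true,false,false,true,true,false],[true,false,false,true,false,true],[true,false,false,true,false,false],[true,false,false,false,false,false],[false,true,true,false,true,true],[false,true,true,false,true,false],[false,true,true,false,false,true],[false,true,true,false,false,false],[false,true,false,true,true,true],[false,true,false,true,true,false],[false,true,false,true,false,true],[false,true,false,true,false,false],[false,true,false,false,true,true],[false,true,false,false,false,false],[false,false,true,true,false,true],[false,false,true,true,false,false],[false,false,true,false,true,true],[false,false,true,false,true,false],[false,false,true,false,false,true],[false,false,true,false,false,false],[true,true,true,false,true,true,false],[true,true,true,false,true,false,true],[true,true,true,false,true,false,false],[true,true,true,false,false,true,true],[true,true,true,false,false,true,false],[true,true,false,true,true,false,true],[true,true,false,true,true,false,false],[tr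ue,true,false,true,false,true,true],[true,true,false,true,false,true,false],[true,true,false,true,false,false,true],[true,true,false,true,false,false,false],[true,true,false,false,true,true,true],[true,true,false,false,true,true,false],[true,true,false,false,true,false,true],[true,true,false,false,true,false,false],[true,true,false,false,false,false,false],[true,false,true,true,false,true,true],[true,false,true,true,false,true,false],[true,false,true,true,false,false,true],[true,false,true,true,false,false,false],[true,false,true,false,true,true,true],[true,false,true,false,true,true,false],[true,false,true,false,true,false,false],[true,false,true,false,false,true,true],[true,false,true,false,false,false,false],[true,false,false,true,true,false,true],[true,false,false,true,true,false,false],[true,false,false,true,false,true,true],[true,false,false,true,false,true,false],[true,false,false,true,false,false,false],[false,true,true,false,true,true,true],[false,true,true,false,true,false,true],[false,true,true,false,true,false,false],[false,true,true,false,false,true,true],[false,true,true,false,false,true,false],[false,true,true,false,false,false,false],[false,true,false,true,true,false,true],[false,true,false,true,true,false,false],[false,true,false,true,false,true,true],[false,true,false,true,false,false,true],[false,true,false,true,false,false,false],[false,true,false,false,true,true,true],[false,true,false,false,true,true,false],[false,true,false,false,false,false,false],[false,false,true,true,false,true,true],[false,false,true,true,false,true,false],[false,false,true,true,false,false,true]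,[false,false,true,true,false,false,false],[false,false,true,false,true,true,true],[false,false,true,false,true,true,false],[false,false,true,false,true,false,true],[false,false,true,false,true,false,false],[false,false,true,false,false,true,true],[false,false,true,false,false,false,false],[true,true,true,false,true,true,false,true],[true,true,true,false,true,true,false,false],[true,true,true,false,true,false,true,true],[true,true,true,false,true,false,true,false],[true,true,true,false,false,true,true,false],[true,true,true,false,false,true,false,true],[true,true,true,false,false,true,false,false],[true,true,false,true,true,false,true,false],[true,true,false,true,true,false,false,true],[true,true,false,true,true,false,false,false],[true,true,false,true,false,true,true,true],[true,true,false,true,false,true,true,false],[true,true,false,true,false,true,false,false],[true,true,false,true,false,false,true,true],[true,true,false,true,false,false,false,false],[true,true,false,false,true,true,false,true],[true,true,false,false,true,true,false,false],[true,true,false,false,true,false,true,true],[true,true,false,false,true,false,true,false],[true,true,false,false,true,false,false,false],[true,false,true,true,false,true,true,true],[true,false,true,true,false,true,false,true],[true,false,true,true,false,true,false,false],[true,false,true,true,false,false,true,true]]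

set_option maxRecDepth 100000 in
set_option maxHeartbeats 4000000 in
lemma words_nodup : (words.map wf).Nodup := by decide

lemma wf_mem (l : List Bool) : wf l ∈ Subgroup.closure ({MA, MB} : Set SL7) := by
  apply Subgroup.list_prod_mem
  intro x hx
  simp only [List.mem_map] at hx
  obtain ⟨b, -, rfl⟩ := hx
  cases b <;> simp <;> [exact Subgroup.subset_closure (Or.inr rfl); exact Subgroup.subset_closure (Or.inl rfl)]

set_option maxRecDepth 10000 in
lemma card_SL7 : Nat.card SL7 = 336 := by
  rw [Nat.card_eq_fintype_card]; decide

lemma closure_AB : Subgroup.closure ({MA, MB} : Set SL7) = ⊤ := by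
  set H := Subgroup.closure ({MA, MB} : Set SL7) with hH
  have hsub : ↑((words.map wf).toFinset) ⊆ (H : Set SL7) := by
    intro x hx
    simp only [Finset.coe_sort_coe, List.coe_toFinset, List.mem_map, Set.mem_setOf_eq] at hx
    obtain ⟨l, -, rfl⟩ := hx
    exact wf_mem l
  have hlen : (words.map wf).toFinset.card = 169 := by
    rw [List.toFinset_card_of_nodup words_nodup]; rfl
  have hle : 169 ≤ Nat.card H := by
    rw [← hlen]
    calc (words.map wf).toFinset.card = ((words.map wf).toFinset : Set SL7).ncard := by
          rw [Set.ncard_coe_finset]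
      _ ≤ (H : Set SL7).ncard := Set.ncard_le_ncard hsub (Set.toFinite _)
      _ = Nat.card H := (Nat.card_coe_set_eq _).symm
  have hdvd : Nat.card H ∣ 336 := card_SL7 ▸ Subgroup.card_subgroup_dvd_card H
  obtain ⟨k, hk⟩ := hdvd
  have hcard : Nat.card H = 336 := by
    rcases k with _ | _ | k
    · omega
    · omega
    · nlinarith
  exact Subgroup.eq_top_of_card_eq H (by rw [hcard, card_SL7])

def MC : SL7 := ⟨!![0,1;6,5], by decide⟩

lemma comm_eq : ⁅MA, MB⁆⁻¹ = MC := by decide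

lemma MC_pow7 : MC ^ 7 ∈ Subgroup.center SL7 := by
  rw [Matrix.SpecialLinearGroup.mem_center_iff]
  exact ⟨-1, by decide, by decide⟩

lemma MC_not_center : MC ∉ Subgroup.center SL7 := by
  rw [Matrix.SpecialLinearGroup.mem_center_iff]
  rintro ⟨r, -, hr⟩
  have h01 := congrFun (congrFun hr 0) 1
  simp [Matrix.scalar_apply, Matrix.diagonal, MC] at h01
  exact absurd h01 (by decide)

end Stmt9Aux

open Stmt9Aux in
theorem stmt9 : ∃ a b c : ProjectiveSpecialLinearGroup (Fin 2) (ZMod 7),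
    orderOf c = 7 ∧ ⁅a, b⁆ * c = 1 ∧
      Subgroup.closure
        ({a, b, c} : Set (ProjectiveSpecialLinearGroup (Fin 2) (ZMod 7))) = ⊤ := by
  let π : SL7 →* ProjectiveSpecialLinearGroup (Fin 2) (ZMod 7) :=
    QuotientGroup.mk' (Subgroup.center SL7)
  refine ⟨π MA, π MB, ⁅π MA, π MB⁆⁻¹, ?_, mul_inv_cancel _, ?_⟩
  · have hc : ⁅π MA, π MB⁆⁻¹ = π MC := by
      rw [← comm_eq]
      simp [commutatorElement_def, _root_.map_mul, map_inv]
    rw [hc]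
    haveI : Fact (Nat.Prime 7) := ⟨by norm_num⟩
    refine orderOf_eq_prime ?_ ?_
    · rw [← map_pow]
      exact (QuotientGroup.eq_one_iff _).mpr MC_pow7
    · intro h
      rw [show (1 : ProjectiveSpecialLinearGroup (Fin 2) (ZMod 7)) = π 1 from (map_one π).symm] at h
      have := (QuotientGroup.mk'_eq_mk' (Subgroup.center SL7)).mp h
      obtain ⟨z, hz, hz2⟩ := this
      exact MC_not_center (by rw [eq_inv_of_mul_eq_one_left hz2]; exact Subgroup.inv_mem _ hz)
  · have h1 : Subgroup.closure ({π MA, π MB} :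
        Set (ProjectiveSpecialLinearGroup (Fin 2) (ZMod 7))) = ⊤ := by
      have himg : ({π MA, π MB} : Set (ProjectiveSpecialLinearGroup (Fin 2) (ZMod 7)))
          = π '' {MA, MB} := by
        simp [Set.image_insert_eq]
      rw [himg, ← MonoidHom.map_closure, closure_AB, ← MonoidHom.range_eq_map]
      exact MonoidHom.range_eq_top_of_surjective _ (QuotientGroup.mk'_surjective _)
    rw [eq_top_iff, ← h1]
    apply Subgroup.closure_mono
    intro x hx
    rcases hx with h | h
    · exact Or.inl h
    · exact Or.inr (Or.inl h)
end

section
/- There exist three elements x, y, z in PSL(2,7) with o(x) = o(y) = 3, o(z) = 7, x·y·z = 1, and ⟨x, y, z⟩ = PSL(2,7). (Explicitly, viewing PSL(2,7) as permutations of 8 points: x = (1,8,4)(2,7,3), y = (1,2,8)(4,5,6), z = (2,4,6,5,8,3,7).) -/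
open Matrix

namespace PSL27Aux

abbrev SL := SpecialLinearGroup (Fin 2) (ZMod 7)
abbrev PSL := ProjectiveSpecialLinearGroup (Fin 2) (ZMod 7)

instance : DecidableEq SL :=
  inferInstanceAs (DecidableEq {A : Matrix (Fin 2) (Fin 2) (ZMod 7) // A.det = 1})

def X : SL := ⟨!![0, 3; 2, 6], by decide⟩
def Y : SL := ⟨!![6, 5; 5, 2], by decide⟩
def Z : SL := ⟨!![1, 1; 0, 1], by decide⟩
def W : SL := ⟨!![6, 0; 0, 6], by decide⟩

lemma scalar_one : (scalar (Fin 2) (1 : ZMod 7)) = ((1 : SL) : Matrix (Fin 2) (Fin 2) (ZMod 7)) := by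
  decide

lemma scalar_neg_one :
    (scalar (Fin 2) (-1 : ZMod 7)) = ((W : SL) : Matrix (Fin 2) (Fin 2) (ZMod 7)) := by
  decide

lemma WW : W * W = 1 := by decide

lemma mem_center_iff' (A : SL) :
    A ∈ Subgroup.center SL ↔ A = 1 ∨ A = W := by
  rw [Matrix.SpecialLinearGroup.mem_center_iff]
  constructor
  · rintro ⟨r, hr, hs⟩
    have key : ∀ r : ZMod 7, r ^ Fintype.card (Fin 2) = 1 → r = 1 ∨ r = -1 := by decide
    rcases key r hr with rfl | rfl
    · exact Or.inl (Subtype.coe_injective (hs.symm.trans scalar_one))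
    · exact Or.inr (Subtype.coe_injective (hs.symm.trans scalar_neg_one))
  · rintro (rfl | rfl)
    · exact ⟨1, by decide, scalar_one⟩
    · exact ⟨-1, by decide, scalar_neg_one⟩

lemma mk_eq_mk (A B : SL) :
    (QuotientGroup.mk A : PSL) = QuotientGroup.mk B ↔ B = A ∨ B = A * W := by
  rw [QuotientGroup.eq, mem_center_iff']
  constructor
  · rintro (h | h)
    · left
      simpa [mul_assoc] using congrArg (A * ·) h
    · right
      simpa [mul_assoc] using congrArg (A * ·) h
  · rintro (rfl | rfl)
    · left; group
    · right; group

lemma mk_eq_one (A : SL) :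
    (QuotientGroup.mk A : PSL) = 1 ↔ A = 1 ∨ A = W := by
  have h := mk_eq_mk A 1
  rw [show (QuotientGroup.mk (1 : SL) : PSL) = 1 from rfl] at h
  rw [h]
  constructor
  · rintro (h1 | h1)
    · exact Or.inl h1.symm
    · right
      have := congrArg (· * W) h1
      simpa [mul_assoc, WW] using this.symm
  · rintro (rfl | rfl)
    · exact Or.inl rfl
    · exact Or.inr WW.symm

lemma center_eq : Subgroup.center SL = Subgroup.zpowers W := by
  ext A
  rw [mem_center_iff', Subgroup.mem_zpowers_iff]
  constructor
  · rintro (rfl | rfl)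
    · exact ⟨0, by norm_num⟩
    · exact ⟨1, by norm_num⟩
  · rintro ⟨k, rfl⟩
    have hW2 : (W : SL) ^ (2 : ℤ) = 1 := by
      rw [show (2 : ℤ) = ((2 : ℕ) : ℤ) from rfl, zpow_natCast, pow_two, WW]
    have : W ^ k = W ^ (k % 2) := by
      conv_lhs => rw [← Int.emod_add_mul_ediv k 2]
      rw [_root_.zpow_add, _root_.zpow_mul, hW2, _root_.one_zpow, mul_one]
    rw [this]
    have h01 : k % 2 = 0 ∨ k % 2 = 1 := by omega
    rcases h01 with h | h <;> rw [h]
    · left; norm_num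
    · right; norm_num

lemma card_SL : Nat.card SL = 336 := by
  rw [Nat.card_eq_fintype_card]
  set_option maxRecDepth 20000 in decide

lemma orderOf_W : orderOf W = 2 := by
  haveI : Fact (Nat.Prime 2) := ⟨by norm_num⟩
  exact orderOf_eq_prime (by rw [pow_two, WW]) (by decide)

lemma card_PSL : Nat.card PSL = 168 := by
  have h := Subgroup.card_eq_card_quotient_mul_card_subgroup (Subgroup.center SL)
  have h2 : Nat.card (Subgroup.center SL) = 2 := by
    rw [center_eq, Nat.card_zpowers, orderOf_W]
  rw [card_SL, h2] at h
  show Nat.card (SL ⧸ Subgroup.center SL) = 168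
  omega

lemma sylow_aux {G : Type*} [Group G] [Finite G] (H : Subgroup G) {x z : G}
    (hx : x ∈ H) (hz : z ∈ H) (hz7 : orderOf z = 7) (hcard : Nat.card H ∣ 84) :
    x * z * x⁻¹ ∈ Subgroup.zpowers z := by
  haveI : Fact (Nat.Prime 7) := ⟨by norm_num⟩
  set xh : H := ⟨x, hx⟩
  set zh : H := ⟨z, hz⟩
  have horder : orderOf zh = 7 := by
    have := orderOf_injective H.subtype H.subtype_injective zh
    exact this.symm.trans hz7
  have hPcard : Nat.card (Subgroup.zpowers zh) = 7 := by
    rw [Nat.card_zpowers, horder]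
  have hn0 : Nat.card H ≠ 0 := Nat.card_pos.ne'
  have h7dvd : 7 ∣ Nat.card H := horder ▸ orderOf_dvd_natCard zh
  have hfact : (Nat.card H).factorization 7 = 1 := by
    have h1 : 1 ≤ (Nat.card H).factorization 7 := by
      rw [← Nat.Prime.pow_dvd_iff_le_factorization (by norm_num) hn0]
      simpa using h7dvd
    have h2 : ¬ 2 ≤ (Nat.card H).factorization 7 := by
      rw [← Nat.Prime.pow_dvd_iff_le_factorization (by norm_num) hn0]
      intro hcon
      have : (7 : ℕ) ^ 2 ∣ 84 := hcon.trans hcard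
      norm_num at this
    omega
  let P : Sylow 7 H := Sylow.ofCard (Subgroup.zpowers zh) (by rw [hPcard, hfact, pow_one])
  have hPindex : (P : Subgroup H).index ∣ 12 := by
    have hmul := Subgroup.card_mul_index (P : Subgroup H)
    have hcP : Nat.card (P : Subgroup H) = 7 := hPcard
    rw [hcP] at hmul
    obtain ⟨e, he⟩ := hcard
    refine ⟨e, ?_⟩
    have h84 : 7 * ((P : Subgroup H).index * e) = 7 * 12 := by
      rw [← mul_assoc, hmul, ← he]
    omega
  have hdvd : Nat.card (Sylow 7 H) ∣ 12 := (Sylow.card_dvd_index P).trans hPindex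
  have hmod : Nat.card (Sylow 7 H) % 7 = 1 := by
    have := card_sylow_modEq_one 7 H
    simpa [Nat.ModEq] using this
  have hone : Nat.card (Sylow 7 H) = 1 := by
    have hle : Nat.card (Sylow 7 H) ≤ 12 := Nat.le_of_dvd (by norm_num) hdvd
    have hge : 1 ≤ Nat.card (Sylow 7 H) := Nat.one_le_iff_ne_zero.mpr (by
      intro h; rw [h] at hmod; simp at hmod)
    interval_cases h : (Nat.card (Sylow 7 H)) <;> omega
  haveI : Subsingleton (Sylow 7 H) := (Nat.card_eq_one_iff_unique.mp hone).1
  have hsmul : xh • P = P := Subsingleton.elim _ _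
  rw [Sylow.smul_eq_iff_mem_normalizer] at hsmul
  have hmem : xh * zh * xh⁻¹ ∈ (P : Subgroup H) :=
    (Subgroup.mem_normalizer_iff.mp hsmul zh).mp (Subgroup.mem_zpowers zh)
  obtain ⟨k, hk⟩ := Subgroup.mem_zpowers_iff.mp hmem
  refine Subgroup.mem_zpowers_iff.mpr ⟨k, ?_⟩
  have := congrArg (H.subtype) hk
  simpa using this

end PSL27Aux

open PSL27Aux in
theorem stmt10 : ∃ x y z : ProjectiveSpecialLinearGroup (Fin 2) (ZMod 7),
    orderOf x = 3 ∧ orderOf y = 3 ∧ orderOf z = 7 ∧ x * y * z = 1 ∧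
      Subgroup.closure
        ({x, y, z} : Set (ProjectiveSpecialLinearGroup (Fin 2) (ZMod 7))) = ⊤ := by
  haveI : Fact (Nat.Prime 3) := ⟨by norm_num⟩
  haveI : Fact (Nat.Prime 7) := ⟨by norm_num⟩
  have hox : orderOf (QuotientGroup.mk X : PSL) = 3 := by
    refine orderOf_eq_prime ?_ ?_
    · rw [← QuotientGroup.mk_pow, mk_eq_one]; decide
    · simp only [ne_eq, mk_eq_one]; decide
  have hoy : orderOf (QuotientGroup.mk Y : PSL) = 3 := by
    refine orderOf_eq_prime ?_ ?_
    · rw [← QuotientGroup.mk_pow, mk_eq_one]; decide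
    · simp only [ne_eq, mk_eq_one]; decide
  have hoz : orderOf (QuotientGroup.mk Z : PSL) = 7 := by
    refine orderOf_eq_prime ?_ ?_
    · rw [← QuotientGroup.mk_pow, mk_eq_one]; decide
    · simp only [ne_eq, mk_eq_one]; decide
  refine ⟨QuotientGroup.mk X, QuotientGroup.mk Y, QuotientGroup.mk Z, hox, hoy, hoz, ?_, ?_⟩
  · rw [← QuotientGroup.mk_mul, ← QuotientGroup.mk_mul, mk_eq_one]
    decide
  · set H : Subgroup PSL :=
      Subgroup.closure {QuotientGroup.mk X, QuotientGroup.mk Y, QuotientGroup.mk Z} with hH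
    have hx : (QuotientGroup.mk X : PSL) ∈ H := Subgroup.subset_closure (by simp)
    have hz : (QuotientGroup.mk Z : PSL) ∈ H := Subgroup.subset_closure (by simp)
    have hdvd168 : Nat.card H ∣ 168 := card_PSL ▸ Subgroup.card_subgroup_dvd_card H
    have h3 : 3 ∣ Nat.card H := by
      have hd := orderOf_dvd_natCard (⟨_, hx⟩ : H)
      rw [← orderOf_injective H.subtype H.subtype_injective ⟨_, hx⟩] at hd
      simp only [Subgroup.coe_subtype] at hd
      rwa [hox] at hd
    have h7 : 7 ∣ Nat.card H := by
      have hd := orderOf_dvd_natCard (⟨_, hz⟩ : H)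
      rw [← orderOf_injective H.subtype H.subtype_injective ⟨_, hz⟩] at hd
      simp only [Subgroup.coe_subtype] at hd
      rwa [hoz] at hd
    have h21 : 21 ∣ Nat.card H := Nat.Coprime.mul_dvd_of_dvd_of_dvd (by norm_num) h3 h7
    rcases eq_or_ne (Nat.card H) 168 with h168 | hne
    · exact Subgroup.eq_top_of_card_eq H (by rw [h168, card_PSL])
    exfalso
    have h84 : Nat.card H ∣ 84 := by
      obtain ⟨e, he⟩ := hdvd168
      obtain ⟨k, hk⟩ := h21
      have hke : 21 * (k * e) = 21 * 8 := by rw [← mul_assoc, ← hk, ← he]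
      have hke8 : k * e = 8 := by omega
      have hk8 : k ∣ 8 := ⟨e, hke8.symm⟩
      have hk1 : 1 ≤ k := by
        rcases Nat.eq_zero_or_pos k with rfl | h
        · omega
        · exact h
      have hkle : k ≤ 8 := Nat.le_of_dvd (by norm_num) hk8
      interval_cases k <;> first | omega | (rw [hk]; norm_num) | rw [hk]
    have hmem := sylow_aux H hx hz hoz h84
    obtain ⟨k, hk⟩ := Subgroup.mem_zpowers_iff.mp hmem
    have key : ∀ m : ℕ, m < 7 →
        (QuotientGroup.mk Z : PSL) ^ m ≠
          QuotientGroup.mk X * QuotientGroup.mk Z * (QuotientGroup.mk X)⁻¹ := by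
      intro m hm
      rw [← QuotientGroup.mk_pow, ← QuotientGroup.mk_inv, ← QuotientGroup.mk_mul,
        ← QuotientGroup.mk_mul]
      interval_cases m <;> (simp only [ne_eq, mk_eq_mk]; decide)
    have h7Z : (QuotientGroup.mk Z : PSL) ^ (7 : ℤ) = 1 := by
      have hp := pow_orderOf_eq_one (QuotientGroup.mk Z : PSL)
      rw [hoz] at hp
      rw [show (7 : ℤ) = ((7 : ℕ) : ℤ) from rfl, zpow_natCast]
      exact hp
    have hmod : (QuotientGroup.mk Z : PSL) ^ ((k % 7).toNat) =
        (QuotientGroup.mk Z : PSL) ^ k := by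
      rw [← zpow_natCast, Int.toNat_of_nonneg (Int.emod_nonneg k (by norm_num))]
      conv_rhs => rw [← Int.emod_add_mul_ediv k 7]
      rw [_root_.zpow_add, _root_.zpow_mul, h7Z, _root_.one_zpow, mul_one]
    refine key (k % 7).toNat ?_ (hmod.trans hk)
    omega
end

section
/- There exist three elements x, y, z in PSL(2,7) with o(x) = 3, o(y) = 4, o(z) = 7, x·y·z = 1, and ⟨x, y, z⟩ = PSL(2,7). (Explicitly: x = (1,8,3)(4,7,5), y = (1,2,6,8)(3,7,5,4), z = (2,3,5,4,7,8,6).) -/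
open Matrix

namespace PSL27aux

instance fact7 : Fact (Nat.Prime 7) := ⟨by norm_num⟩

abbrev SL7 := Matrix.SpecialLinearGroup (Fin 2) (ZMod 7)
abbrev PSL7 := Matrix.ProjectiveSpecialLinearGroup (Fin 2) (ZMod 7)

instance : DecidableEq SL7 := fun _ _ => decidable_of_iff _ Subtype.ext_iff.symm

def Xm : SL7 := ⟨!![0,2;3,1], by decide⟩
def Ym : SL7 := ⟨!![1,4;4,3], by decide⟩
def Zm : SL7 := ⟨!![1,1;0,1], by decide⟩
def Lm : SL7 := ⟨!![1,0;1,1], by decide⟩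
def Nm : SL7 := ⟨!![6,0;0,6], by decide⟩
def E12 (u : ZMod 7) : SL7 := ⟨!![1,u;0,1], by simp [Matrix.det_fin_two_of]⟩
def E21 (u : ZMod 7) : SL7 := ⟨!![1,0;u,1], by simp [Matrix.det_fin_two_of]⟩

abbrev mk : SL7 →* PSL7 := QuotientGroup.mk' (Subgroup.center SL7)

lemma decomp (A : SL7) (hc : A.1 1 0 ≠ 0) :
    A = E12 ((A.1 0 0 - 1) * (A.1 1 0)⁻¹) * E21 (A.1 1 0) *
        E12 ((A.1 1 1 - 1) * (A.1 1 0)⁻¹) := by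
  have hdet : A.1 0 0 * A.1 1 1 - A.1 0 1 * A.1 1 0 = 1 := by
    have := A.2; rwa [Matrix.det_fin_two] at this
  apply Subtype.ext
  show A.1 = _
  rw [Matrix.SpecialLinearGroup.coe_mul, Matrix.SpecialLinearGroup.coe_mul]
  show A.1 = (!![1,_;0,1] : Matrix (Fin 2) (Fin 2) (ZMod 7)) * !![1,0;_,1] * !![1,_;0,1]
  ext i j
  fin_cases i <;> fin_cases j <;>
    simp [Matrix.mul_apply, Fin.sum_univ_two] <;>
    field_simp
  · ring
  · linear_combination -hdet
  · ring

lemma hE12mem (H : Subgroup PSL7) (hz : mk Zm ∈ H) (u : ZMod 7) : mk (E12 u) ∈ H := by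
  have h : E12 u = Zm ^ u.val := by revert u; decide
  rw [h, map_pow]; exact pow_mem hz _

lemma hE21mem (H : Subgroup PSL7) (hl : mk Lm ∈ H) (u : ZMod 7) : mk (E21 u) ∈ H := by
  have h : E21 u = Lm ^ u.val := by revert u; decide
  rw [h, map_pow]; exact pow_mem hl _

lemma top_le (H : Subgroup PSL7) (hz : mk Zm ∈ H) (hl : mk Lm ∈ H) : H = ⊤ := by
  rw [Subgroup.eq_top_iff']
  intro g
  refine QuotientGroup.induction_on g ?_
  intro A
  have main : ∀ B : SL7, B.1 1 0 ≠ 0 → mk B ∈ H := by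
    intro B hcB
    rw [decomp B hcB, _root_.map_mul, _root_.map_mul]
    exact mul_mem (mul_mem (hE12mem H hz _) (hE21mem H hl _)) (hE12mem H hz _)
  show mk A ∈ H
  by_cases hc : A.1 1 0 = 0
  · have hd : A.1 1 1 ≠ 0 := by
      intro hd
      have hdet := A.2
      rw [Matrix.det_fin_two] at hdet
      rw [hc, hd] at hdet
      simp at hdet
    have hB : ((A * Lm).1) 1 0 ≠ 0 := by
      have hB' : (A * Lm).1 1 0 = A.1 1 1 := by
        rw [Matrix.SpecialLinearGroup.coe_mul]
        simp [Matrix.mul_apply, Fin.sum_univ_two, Lm, hc]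
      rw [hB']; exact hd
    have h1 : mk (A * Lm) ∈ H := main _ hB
    have h2 : mk A = mk (A * Lm) * (mk Lm)⁻¹ := by rw [_root_.map_mul]; group
    rw [h2]; exact mul_mem h1 (inv_mem hl)
  · exact main A hc

lemma centerNeg : Nm ∈ Subgroup.center SL7 := by
  rw [Subgroup.mem_center_iff]
  intro g
  apply Subtype.ext
  rw [Matrix.SpecialLinearGroup.coe_mul, Matrix.SpecialLinearGroup.coe_mul]
  show g.1 * (!![6,0;0,6] : Matrix (Fin 2) (Fin 2) (ZMod 7)) = !![6,0;0,6] * g.1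
  ext i j
  fin_cases i <;> fin_cases j <;>
    simp [Matrix.mul_apply, Fin.sum_univ_two] <;> ring

lemma mk_eq_one_of_nm {A : SL7} (h : A = Nm) : mk A = 1 := by
  rw [h]
  exact (QuotientGroup.eq_one_iff _).mpr centerNeg

lemma notcen {A g : SL7} (h : A * g ≠ g * A) : mk A ≠ 1 := by
  intro hA
  rw [QuotientGroup.mk'_apply, QuotientGroup.eq_one_iff] at hA
  exact h ((Subgroup.mem_center_iff.mp hA g).symm)

end PSL27aux

open PSL27aux in
theorem stmt12 : ∃ x y z : ProjectiveSpecialLinearGroup (Fin 2) (ZMod 7),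
    orderOf x = 3 ∧ orderOf y = 4 ∧ orderOf z = 7 ∧ x * y * z = 1 ∧
      Subgroup.closure
        ({x, y, z} : Set (ProjectiveSpecialLinearGroup (Fin 2) (ZMod 7))) = ⊤ := by
  refine ⟨mk Xm, mk Ym, mk Zm, ?_, ?_, ?_, ?_, ?_⟩
  · refine orderOf_eq_prime ?_ ?_
    · rw [← map_pow]
      exact mk_eq_one_of_nm (by decide)
    · exact notcen (g := Zm) (by decide)
  · have h4 : orderOf (mk Ym) = 2 ^ (1 + 1) := by
      refine orderOf_eq_prime_pow ?_ ?_
      · rw [pow_one, ← map_pow]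
        exact notcen (g := Zm) (by decide)
      · rw [show (2:ℕ) ^ (1+1) = 4 by norm_num, ← map_pow]
        exact mk_eq_one_of_nm (by decide)
    rw [h4]; norm_num
  · refine orderOf_eq_prime ?_ ?_
    · rw [← map_pow]
      have h7 : Zm ^ 7 = 1 := by decide
      rw [h7, _root_.map_one]
    · exact notcen (g := Lm) (by decide)
  · rw [← _root_.map_mul, ← _root_.map_mul]
    have h1 : Xm * Ym * Zm = 1 := by decide
    rw [h1, _root_.map_one]
  · apply top_le
    · exact Subgroup.subset_closure (by simp)
    · have hw : Xm * Zm * Ym * Zm⁻¹ * Xm = Lm := by decide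
      have : mk Lm = mk Xm * mk Zm * mk Ym * (mk Zm)⁻¹ * mk Xm := by
        rw [← _root_.map_inv, ← _root_.map_mul, ← _root_.map_mul, ← _root_.map_mul, ← _root_.map_mul, hw]
      rw [this]
      have hx : mk Xm ∈ Subgroup.closure ({mk Xm, mk Ym, mk Zm} : Set PSL7) :=
        Subgroup.subset_closure (by simp)
      have hy : mk Ym ∈ Subgroup.closure ({mk Xm, mk Ym, mk Zm} : Set PSL7) :=
        Subgroup.subset_closure (by simp)
      have hz : mk Zm ∈ Subgroup.closure ({mk Xm, mk Ym, mk Zm} : Set PSL7) :=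
        Subgroup.subset_closure (by simp)
      exact mul_mem (mul_mem (mul_mem (mul_mem hx hz) hy) (inv_mem hz)) hx
end
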